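/- Consider, for each n ≥ 1, the family of 2^n functions on [0,1]^n given by F_σ(v) = Π_{i=1}^n ρ_{σ(i)}(v_i) where ρ_a(t) = t and ρ_b(t) = 1−t, indexed by σ ∈ {a,b}^n. Then for every σ ∈ {a,b}^n there exists a point v_σ ∈ [0,1]^n (namely v_σ(i) = 1 if σ(i) = a and 0 otherwise) such that F_σ(v_σ) = 1 while F_{σ'}(v_σ) = 0 for all σ' ≠ σ. Consequently any set Ω ⊆ {a,b}^n such that for each v ∈ [0,1]^n some σ ∈ Ω maximizes F_σ(v) over all σ ∈ {a,b}^n must have |Ω| = 2^n. -/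
import Mathlib


/-- The scheduler-value function of the pMDP `M_n`: scheduler `σ : Fin n → Bool`
(`true` = action `a`) has reachability probability `∏ i, ρ_{σ i}(v i)` where
`ρ_a(t) = t` and `ρ_b(t) = 1 - t`. -/
noncomputable def schedulerValue (n : ℕ) (σ : Fin n → Bool) (v : Fin n → ℝ) : ℝ :=
  ∏ i, if σ i then v i else 1 - v i

lemma key (n : ℕ) (σ : Fin n → Bool) :
    (∀ i, (fun i => if σ i then (1:ℝ) else 0) i ∈ Set.Icc (0:ℝ) 1) ∧
    schedulerValue n σ (fun i => if σ i then (1:ℝ) else 0) = 1 ∧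
    ∀ σ' : Fin n → Bool, σ' ≠ σ →
      schedulerValue n σ' (fun i => if σ i then (1:ℝ) else 0) = 0 := by
  refine ⟨fun i => by by_cases h : σ i <;> simp [h], ?_, ?_⟩
  · unfold schedulerValue
    apply Finset.prod_eq_one
    intro i _
    by_cases h : σ i <;> simp [h]
  · intro σ' hne
    obtain ⟨i, hi⟩ : ∃ i, σ' i ≠ σ i := by
      by_contra h; push_neg at h; exact hne (funext h)
    unfold schedulerValue
    apply Finset.prod_eq_zero (Finset.mem_univ i)
    cases h : σ i <;> cases h' : σ' i <;> simp_all

/-- Exponential lower bound on minimal optimal scheduler sets: each scheduler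
`σ` is the unique maximizer at some point of `[0,1]^n` (with value `1`, all
others having value `0`), hence any optimal scheduler set has all `2^n`
schedulers. -/
theorem exponential_moss (n : ℕ) (hn : 1 ≤ n) :
    (∀ σ : Fin n → Bool, ∃ v : Fin n → ℝ,
      (∀ i, v i ∈ Set.Icc (0:ℝ) 1) ∧ schedulerValue n σ v = 1 ∧
      ∀ σ' : Fin n → Bool, σ' ≠ σ → schedulerValue n σ' v = 0) ∧
    (∀ Ω : Finset (Fin n → Bool),
      (∀ v : Fin n → ℝ, (∀ i, v i ∈ Set.Icc (0:ℝ) 1) →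
        ∃ σ ∈ Ω, ∀ σ' : Fin n → Bool, schedulerValue n σ' v ≤ schedulerValue n σ v) →
      Ω.card = 2 ^ n) := by
  constructor
  · intro σ
    exact ⟨_, key n σ⟩
  · intro Ω hΩ
    have hall : Ω = Finset.univ := by
      apply Finset.eq_univ_of_forall
      intro σ
      obtain ⟨hmem, hval, hzero⟩ := key n σ
      obtain ⟨τ, hτΩ, hτmax⟩ := hΩ _ hmem
      by_cases h : τ = σ
      · exact h ▸ hτΩ
      · have h1 := hτmax σ
        rw [hval, hzero τ h] at h1
        linarith
    rw [hall]
    simp [Finset.card_univ]
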